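/- Energy rate identity for the semi-discrete scheme (intermediate step in the proof of Lemma 1). Let n̂, n₁, n₂ be positive integers. Let Ĥ, Ĵ be positive diagonal n̂×n̂ real matrices, H₁, J₁ positive diagonal n₁×n₁, H₂, J₂ positive diagonal n₂×n₂, and let D₁ ∈ ℝ^{n₁×n̂}, D₂ ∈ ℝ^{n₂×n̂}, D̂₁ ∈ ℝ^{n̂×n₁}, D̂₂ ∈ ℝ^{n̂×n₂} be arbitrary. Set H = blockdiag(H₁, H₂), J = blockdiag(J₁, J₂), and let G be an invertible (n₁+n₂)×(n₁+n₂) real matrix such that H·J·G⁻¹ is symmetric. Suppose p : ℝ → ℝ^{n̂}, v¹ : ℝ → ℝ^{n₁}, v² : ℝ → ℝ^{n₂} are differentiable and satisfy, for all t, Ĵ·p′(t) = −(D̂₁·J₁·v¹(t) + D̂₂·J₂·v²(t)) and (v¹, v²)′(t) = −G·(D₁·p(t), D₂·p(t)). Then for all t, the derivative of E(t) = ½·p(t)ᵀ·Ĥ·Ĵ·p(t) + ½·(v¹(t), v²(t))ᵀ·H·J·G⁻¹·(v¹(t), v²(t)) equals E′(t) = −p(t)ᵀ·(Ĥ·D̂₁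 + D₁ᵀ·H₁)·J₁·v¹(t) − p(t)ᵀ·(Ĥ·D̂₂ + D₂ᵀ·H₂)·J₂·v²(t). -/

import Mathlib

open Matrix

private lemma quad_hasDerivAt {n : Type*} [Fintype n] (M : Matrix n n ℝ)
    (f f' : ℝ → n → ℝ) (t : ℝ) (hf : HasDerivAt f (f' t) t) :
    HasDerivAt (fun s => f s ⬝ᵥ M *ᵥ f s)
      (f' t ⬝ᵥ M *ᵥ f t + f t ⬝ᵥ M *ᵥ f' t) t := by
  have hcomp := hasDerivAt_pi.mp hf
  have key : HasDerivAt (fun s => ∑ i, f s i * ∑ j, M i j * f s j)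
      (∑ i, (f' t i * ∑ j, M i j * f t j + f t i * ∑ j, M i j * f' t j)) t := by
    refine HasDerivAt.fun_sum fun i _ => ?_
    exact (hcomp i).mul (HasDerivAt.fun_sum fun j _ => (hcomp j).const_mul (M i j))
  have e1 : (fun s => ∑ i, f s i * ∑ j, M i j * f s j)
      = fun s => f s ⬝ᵥ M *ᵥ f s := by
    funext s; simp [dotProduct, mulVec]
  have e2 : (∑ i, (f' t i * ∑ j, M i j * f t j + f t i * ∑ j, M i j * f' t j))
      = f' t ⬝ᵥ M *ᵥ f t + f t ⬝ᵥ M *ᵥ f' t := by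
    simp [dotProduct, mulVec, Finset.sum_add_distrib]
  rw [e1, e2] at key
  exact key

private lemma symm_dot {n : Type*} [Fintype n] {M : Matrix n n ℝ}
    (hM : Mᵀ = M) (x y : n → ℝ) : x ⬝ᵥ M *ᵥ y = y ⬝ᵥ M *ᵥ x := by
  rw [dotProduct_mulVec, ← mulVec_transpose, hM, dotProduct_comm]

/-- Energy rate identity for the semi-discrete scheme (intermediate step in Lemma 1). -/
theorem stmt1
    (nh n1 n2 : ℕ) (hnh : 0 < nh) (hn1 : 0 < n1) (hn2 : 0 < n2)
    (Hh Jh : Matrix (Fin nh) (Fin nh) ℝ) (dHh dJh : Fin nh → ℝ)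
    (hHh : Hh = diagonal dHh) (hdHh : ∀ i, 0 < dHh i)
    (hJh : Jh = diagonal dJh) (hdJh : ∀ i, 0 < dJh i)
    (H1 J1 : Matrix (Fin n1) (Fin n1) ℝ) (dH1 dJ1 : Fin n1 → ℝ)
    (hH1 : H1 = diagonal dH1) (hdH1 : ∀ i, 0 < dH1 i)
    (hJ1 : J1 = diagonal dJ1) (hdJ1 : ∀ i, 0 < dJ1 i)
    (H2 J2 : Matrix (Fin n2) (Fin n2) ℝ) (dH2 dJ2 : Fin n2 → ℝ)
    (hH2 : H2 = diagonal dH2) (hdH2 : ∀ i, 0 < dH2 i)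
    (hJ2 : J2 = diagonal dJ2) (hdJ2 : ∀ i, 0 < dJ2 i)
    (D1 : Matrix (Fin n1) (Fin nh) ℝ) (D2 : Matrix (Fin n2) (Fin nh) ℝ)
    (Dh1 : Matrix (Fin nh) (Fin n1) ℝ) (Dh2 : Matrix (Fin nh) (Fin n2) ℝ)
    (H J : Matrix (Fin n1 ⊕ Fin n2) (Fin n1 ⊕ Fin n2) ℝ)
    (hH : H = fromBlocks H1 0 0 H2) (hJ : J = fromBlocks J1 0 0 J2)
    (G : Matrix (Fin n1 ⊕ Fin n2) (Fin n1 ⊕ Fin n2) ℝ) (hG : IsUnit G)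
    (hsym : (H * J * G⁻¹)ᵀ = H * J * G⁻¹)
    (p : ℝ → Fin nh → ℝ) (v1 : ℝ → Fin n1 → ℝ) (v2 : ℝ → Fin n2 → ℝ)
    (p' : ℝ → Fin nh → ℝ) (w' : ℝ → (Fin n1 ⊕ Fin n2) → ℝ)
    (hp : ∀ t, HasDerivAt p (p' t) t)
    (hw : ∀ t, HasDerivAt (fun s => Sum.elim (v1 s) (v2 s)) (w' t) t)
    (hode_p : ∀ t, Jh *ᵥ p' t = -(Dh1 *ᵥ (J1 *ᵥ v1 t) + Dh2 *ᵥ (J2 *ᵥ v2 t)))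
    (hode_v : ∀ t, w' t = -(G *ᵥ Sum.elim (D1 *ᵥ p t) (D2 *ᵥ p t)))
    (E : ℝ → ℝ)
    (hE : ∀ t, E t = (1/2) * (p t ⬝ᵥ (Hh * Jh) *ᵥ p t)
        + (1/2) * (Sum.elim (v1 t) (v2 t) ⬝ᵥ (H * J * G⁻¹) *ᵥ Sum.elim (v1 t) (v2 t))) :
    ∀ t, HasDerivAt E
      (-(p t ⬝ᵥ (Hh * Dh1 + D1ᵀ * H1) *ᵥ (J1 *ᵥ v1 t))
        - p t ⬝ᵥ (Hh * Dh2 + D2ᵀ * H2) *ᵥ (J2 *ᵥ v2 t)) t := by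
  intro t
  set A := Hh * Jh with hA
  set B := H * J * G⁻¹ with hB
  set w := fun s => Sum.elim (v1 s) (v2 s) with hwdef
  have hAsym : Aᵀ = A := by
    rw [hA, hHh, hJh, diagonal_mul_diagonal, diagonal_transpose]
  -- derivative of E at t
  have hd1 := quad_hasDerivAt A p p' t (hp t)
  have hd2 := quad_hasDerivAt B w w' t (hw t)
  have hEeq : E = fun s => (1/2) * (p s ⬝ᵥ A *ᵥ p s) + (1/2) * (w s ⬝ᵥ B *ᵥ w s) := by
    funext s; exact hE s
  have hder : HasDerivAt E
      ((1/2) * (p' t ⬝ᵥ A *ᵥ p t + p t ⬝ᵥ A *ᵥ p' t)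
        + (1/2) * (w' t ⬝ᵥ B *ᵥ w t + w t ⬝ᵥ B *ᵥ w' t)) t := by
    rw [hEeq]
    exact (hd1.const_mul (1/2 : ℝ)).add (hd2.const_mul (1/2 : ℝ))
  convert hder using 1
  -- simplify the derivative value
  rw [symm_dot hAsym (p' t) (p t), symm_dot hsym (w' t) (w t)]
  ring_nf
  -- compute p t ⬝ᵥ A *ᵥ p' t
  have hterm1 : p t ⬝ᵥ A *ᵥ p' t
      = -(p t ⬝ᵥ (Hh * Dh1) *ᵥ (J1 *ᵥ v1 t)) - p t ⬝ᵥ (Hh * Dh2) *ᵥ (J2 *ᵥ v2 t) := by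
    rw [hA, ← mulVec_mulVec, hode_p t]
    simp [mulVec_add, mulVec_neg, dotProduct_add, dotProduct_neg, mulVec_mulVec]
    simp only [Matrix.mul_assoc]
    ring
  -- compute w t ⬝ᵥ B *ᵥ w' t
  have hcancel : ∀ x : Fin n1 ⊕ Fin n2 → ℝ, G⁻¹ *ᵥ (G *ᵥ x) = x := by
    intro x
    rw [mulVec_mulVec, nonsing_inv_mul G (((Matrix.isUnit_iff_isUnit_det G).mp hG)), one_mulVec]
  have hBw : B *ᵥ w' t = -((H * J) *ᵥ Sum.elim (D1 *ᵥ p t) (D2 *ᵥ p t)) := by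
    rw [hode_v t, mulVec_neg, hB, ← mulVec_mulVec, hcancel]
  have hterm2 : w t ⬝ᵥ B *ᵥ w' t
      = -(p t ⬝ᵥ (D1ᵀ * H1) *ᵥ (J1 *ᵥ v1 t)) - p t ⬝ᵥ (D2ᵀ * H2) *ᵥ (J2 *ᵥ v2 t) := by
    rw [hBw, hH, hJ, fromBlocks_multiply]
    simp only [Matrix.mul_zero, Matrix.zero_mul, add_zero, zero_add]
    rw [fromBlocks_mulVec]
    simp only [Sum.elim_comp_inl, Sum.elim_comp_inr, zero_mulVec, add_zero, zero_add]
    rw [hwdef]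
    simp only [dotProduct_neg, sumElim_dotProduct_sumElim]
    have e1 : v1 t ⬝ᵥ (H1 * J1) *ᵥ (D1 *ᵥ p t) = p t ⬝ᵥ (D1ᵀ * H1) *ᵥ (J1 *ᵥ v1 t) := by
      have hM : (H1 * J1 * D1)ᵀ = D1ᵀ * H1 * J1 := by
        rw [transpose_mul, transpose_mul, hH1, hJ1, diagonal_transpose, diagonal_transpose,
          Matrix.mul_assoc D1ᵀ, diagonal_mul_diagonal, diagonal_mul_diagonal,
          funext fun i => mul_comm (dJ1 i) (dH1 i)]
      rw [mulVec_mulVec, dotProduct_mulVec, ← mulVec_transpose, hM, dotProduct_comm,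
        ← mulVec_mulVec]
    have e2 : v2 t ⬝ᵥ (H2 * J2) *ᵥ (D2 *ᵥ p t) = p t ⬝ᵥ (D2ᵀ * H2) *ᵥ (J2 *ᵥ v2 t) := by
      have hM : (H2 * J2 * D2)ᵀ = D2ᵀ * H2 * J2 := by
        rw [transpose_mul, transpose_mul, hH2, hJ2, diagonal_transpose, diagonal_transpose,
          Matrix.mul_assoc D2ᵀ, diagonal_mul_diagonal, diagonal_mul_diagonal,
          funext fun i => mul_comm (dJ2 i) (dH2 i)]
      rw [mulVec_mulVec, dotProduct_mulVec, ← mulVec_transpose, hM, dotProduct_comm,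
        ← mulVec_mulVec]
    rw [e1, e2]; ring
  rw [hterm1, hterm2]
  simp [Matrix.add_mul, add_mulVec, dotProduct_add]
  ring
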